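/- Let G be a finite p-group, d ≥ 0 with G^{(d+1)} ≠ 1 and |G^{(d)}/G^{(d+1)}| = p^{2^d+1} (a small derived quotient). Then the quotient G^{(d)}/[G^{(d)},G] has order at most p^2. -/

import Mathlib

/-- A derived quotient `G^(d)/G^(d+1)` is small if `G^(d+1) ≠ 1` and it has order `p^(2^d+1)`. -/
def IsSmallDerivedQuotient (p : ℕ) (G : Type*) [Group G] (d : ℕ) : Prop :=
  derivedSeries G (d + 1) ≠ ⊥ ∧
    (derivedSeries G (d + 1)).relIndex (derivedSeries G d) = p ^ (2 ^ d + 1)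

namespace SmallDerivedQuotientAux

open Subgroup

variable {G : Type*} [Group G]

/-- The three subgroups lemma, subgroup-inequality form, for normal subgroups. -/
theorem three_subgroups_le (A B C : Subgroup G) [A.Normal] [B.Normal] [C.Normal] :
    ⁅⁅A, B⁆, C⁆ ≤ ⁅⁅B, C⁆, A⁆ ⊔ ⁅⁅C, A⁆, B⁆ := by
  set N : Subgroup G := ⁅⁅B, C⁆, A⁆ ⊔ ⁅⁅C, A⁆, B⁆ with hN
  haveI : N.Normal := Subgroup.sup_normal _ _
  set f := QuotientGroup.mk' N with hf
  have key : ⁅⁅A.map f, B.map f⁆, C.map f⁆ = ⊥ := by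
    apply Subgroup.commutator_commutator_eq_bot_of_rotate
    · rw [← Subgroup.map_commutator, ← Subgroup.map_commutator, Subgroup.map_eq_bot_iff,
        QuotientGroup.ker_mk']
      exact le_sup_left
    · rw [← Subgroup.map_commutator, ← Subgroup.map_commutator, Subgroup.map_eq_bot_iff,
        QuotientGroup.ker_mk']
      exact le_sup_right
  rw [← Subgroup.map_commutator, ← Subgroup.map_commutator, Subgroup.map_eq_bot_iff,
    QuotientGroup.ker_mk'] at key
  exact key

/-- The descending chain `K, ⁅K,G⁆, ⁅⁅K,G⁆,G⁆, ...`. -/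
def chain (K : Subgroup G) : ℕ → Subgroup G
  | 0 => K
  | j + 1 => ⁅chain K j, (⊤ : Subgroup G)⁆

theorem chain_normal (K : Subgroup G) [hK : K.Normal] : ∀ j, (chain K j).Normal
  | 0 => hK
  | j + 1 => by
      haveI := chain_normal K j
      exact Subgroup.commutator_normal _ _

theorem chain_succ_le (K : Subgroup G) [K.Normal] (j : ℕ) : chain K (j + 1) ≤ chain K j := by
  haveI := chain_normal K j
  exact Subgroup.commutator_le_left _ _

theorem chain_le_of_le (K : Subgroup G) [K.Normal] {j k : ℕ} (h : j ≤ k) :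
    chain K k ≤ chain K j := by
  induction k with
  | zero => simpa using (Nat.le_zero.mp h) ▸ le_rfl
  | succ k ih =>
    rcases Nat.lt_or_ge j (k + 1) with hlt | hge
    · exact (chain_succ_le K k).trans (ih (Nat.lt_succ_iff.mp hlt))
    · have : j = k + 1 := le_antisymm h hge
      subst this; exact le_rfl

/-- Kaloujnine-type doubling: the `i`-th derived subgroup moves the chain by `2^i`. -/
theorem chain_comm_derived (K : Subgroup G) [K.Normal] :
    ∀ (i j : ℕ), ⁅chain K j, derivedSeries G i⁆ ≤ chain K (j + 2 ^ i) := by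
  intro i
  induction i with
  | zero =>
    intro j
    rw [derivedSeries_zero, pow_zero]
    exact le_rfl
  | succ i ih =>
    intro j
    haveI := chain_normal K j
    haveI := derivedSeries_normal G i
    rw [derivedSeries_succ]
    have h3 : ⁅chain K j, ⁅derivedSeries G i, derivedSeries G i⁆⁆
        ≤ ⁅⁅derivedSeries G i, chain K j⁆, derivedSeries G i⁆ ⊔
          ⁅⁅chain K j, derivedSeries G i⁆, derivedSeries G i⁆ := by
      rw [Subgroup.commutator_comm (chain K j)]
      exact three_subgroups_le (derivedSeries G i) (derivedSeries G i) (chain K j)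
    have h4 : ⁅⁅chain K j, derivedSeries G i⁆, derivedSeries G i⁆ ≤ chain K (j + 2 ^ (i + 1)) := by
      calc ⁅⁅chain K j, derivedSeries G i⁆, derivedSeries G i⁆
          ≤ ⁅chain K (j + 2 ^ i), derivedSeries G i⁆ :=
            Subgroup.commutator_mono (ih j) le_rfl
        _ ≤ chain K (j + 2 ^ i + 2 ^ i) := ih (j + 2 ^ i)
        _ = chain K (j + 2 ^ (i + 1)) := by
            congr 1
            have : (2 : ℕ) ^ (i + 1) = 2 ^ i + 2 ^ i := by
              rw [pow_succ, Nat.mul_two]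
            omega
    have h5 : ⁅⁅derivedSeries G i, chain K j⁆, derivedSeries G i⁆
        ≤ chain K (j + 2 ^ (i + 1)) := by
      rw [Subgroup.commutator_comm (derivedSeries G i) (chain K j)]
      exact h4
    exact h3.trans (sup_le h5 h4)

/-- In a nilpotent group, a subgroup with `⁅N,⊤⁆ = N` is trivial. -/
theorem eq_bot_of_comm_top_eq [Group.IsNilpotent G] (N : Subgroup G) (h : ⁅N, (⊤ : Subgroup G)⁆ = N) :
    N = ⊥ := by
  obtain ⟨n, hn⟩ := Subgroup.nilpotent_iff_lowerCentralSeries.mp ‹_›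
  have key : ∀ m : ℕ, N ≤ Subgroup.lowerCentralSeries (⊤ : Subgroup G) m := by
    intro m
    induction m with
    | zero => simp [Subgroup.lowerCentralSeries_zero]
    | succ m ih =>
      rw [Subgroup.lowerCentralSeries_succ]
      calc N = ⁅N, (⊤ : Subgroup G)⁆ := h.symm
        _ ≤ ⁅Subgroup.lowerCentralSeries (⊤ : Subgroup G) m, ⊤⁆ := Subgroup.commutator_mono ih le_rfl
  exact le_bot_iff.mp (hn ▸ key n)

end SmallDerivedQuotientAux

/-- If `G^(d)/G^(d+1)` is a small derived quotient of a finite `p`-group `G`, then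
`G^(d)/[G^(d),G]` has order at most `p^2`. -/
theorem small_derived_quotient_central_quotient_le {p : ℕ} (hp : p.Prime) {G : Type*}
    [Group G] [Finite G] (hG : IsPGroup p G) (d : ℕ) (hsmall : IsSmallDerivedQuotient p G d) :
    (⁅derivedSeries G d, (⊤ : Subgroup G)⁆).relIndex (derivedSeries G d) ≤ p ^ 2 := by
  classical
  obtain ⟨hne, hidx⟩ := hsmall
  haveI : Fact p.Prime := ⟨hp⟩
  haveI : Group.IsNilpotent G := hG.isNilpotent
  open SmallDerivedQuotientAux in
  set K : Subgroup G := derivedSeries G d with hK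
  haveI : K.Normal := derivedSeries_normal G d
  set n : ℕ := 2 ^ d with hn
  have hn1 : 1 ≤ n := Nat.one_le_two_pow
  -- the key containment : G^(d+1) ≤ chain K (2^d)
  have hKd : derivedSeries G (d + 1) ≤ chain K n := by
    have := chain_comm_derived K d 0
    rw [Nat.zero_add] at this
    calc derivedSeries G (d + 1) = ⁅chain K 0, derivedSeries G d⁆ := by
          rw [derivedSeries_succ]; rfl
      _ ≤ chain K n := this
  -- G^(d+1) is below every chain term up to n
  have hKj : ∀ j, j ≤ n → derivedSeries G (d + 1) ≤ chain K j := fun j hj =>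
    hKd.trans (chain_le_of_le K hj)
  -- strictness of the chain above n
  have hstrict : ∀ j, j < n → chain K (j + 1) ≠ chain K j := by
    intro j hj heq
    have hbot : chain K j = ⊥ :=
      eq_bot_of_comm_top_eq (chain K j) heq
    exact hne (le_bot_iff.mp (hbot ▸ hKj j (le_of_lt hj)))
  set D : Subgroup G := derivedSeries G (d + 1) with hD
  set R : ℕ → ℕ := fun j => D.relIndex (chain K j) with hR
  -- relIndex multiplicativity along the chain
  have hmul : ∀ j, j < n → R (j + 1) * ((chain K (j + 1)).relIndex (chain K j)) = R j := by
    intro j hj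
    exact Subgroup.relIndex_mul_relIndex _ _ _ (hKj (j + 1) hj) (chain_succ_le K j)
  -- R j divides R 0
  have hRdvd : ∀ j, j ≤ n → R j ∣ R 0 := by
    intro j hj
    have : R j * ((chain K j).relIndex (chain K 0)) = R 0 :=
      Subgroup.relIndex_mul_relIndex _ _ _ (hKj j hj) (chain_le_of_le K (Nat.zero_le j))
    exact ⟨_, this.symm⟩
  have hR0 : R 0 = p ^ (n + 1) := hidx
  -- each step relIndex for j < n is divisible by p
  have hstep : ∀ j, j < n → p ∣ (chain K (j + 1)).relIndex (chain K j) := by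
    intro j hj
    set r := (chain K (j + 1)).relIndex (chain K j) with hr
    have hdvd : r ∣ p ^ (n + 1) := by
      have h1 : r ∣ R j := ⟨R (j + 1), by rw [← hmul j hj]; ring⟩
      exact hR0 ▸ h1.trans (hRdvd j (le_of_lt hj))
    obtain ⟨e, he, hre⟩ := (Nat.dvd_prime_pow hp).mp hdvd
    rcases Nat.eq_zero_or_pos e with he0 | hepos
    · exfalso
      apply hstrict j hj
      have hr1 : r = 1 := by rw [hre, he0, pow_zero]
      have hle : chain K j ≤ chain K (j + 1) := Subgroup.relIndex_eq_one.mp hr1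
      exact le_antisymm (chain_succ_le K j) hle
    · rw [hre]
      exact dvd_pow_self p (by omega)
  -- p^(n-1) divides R 1 : downward induction
  have hdiv : ∀ k, k ≤ n → p ^ k ∣ R (n - k) := by
    intro k
    induction k with
    | zero => intro _; simp
    | succ k ih =>
      intro hk
      have hk' : k ≤ n := le_of_lt hk
      have hj : n - (k + 1) < n := by omega
      have hj1 : n - (k + 1) + 1 = n - k := by omega
      have h1 := hmul (n - (k + 1)) hj
      rw [hj1] at h1
      have h2 : p ^ k ∣ R (n - k) := ih hk'
      have h3 : p ∣ (chain K (n - (k + 1) + 1)).relIndex (chain K (n - (k + 1))) :=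
        hstep _ hj
      rw [hj1] at h3
      calc p ^ (k + 1) = p ^ k * p := by ring
        _ ∣ R (n - k) * ((chain K (n - k)).relIndex (chain K (n - (k + 1)))) := by
            apply mul_dvd_mul h2
            have := hstep (n - (k + 1)) hj
            rwa [hj1] at this
        _ = R (n - (k + 1)) := by
            have := hmul (n - (k + 1)) hj
            rwa [hj1] at this
  -- assemble
  have hsplit : R 1 * ((chain K 1).relIndex (chain K 0)) = R 0 := hmul 0 hn1
  have hdivR1 : p ^ (n - 1) ∣ R 1 := by
    have := hdiv (n - 1) (by omega)
    have hnn : n - (n - 1) = 1 := by omega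
    rwa [hnn] at this
  obtain ⟨c, hc⟩ := hdivR1
  set T := (chain K 1).relIndex (chain K 0) with hT
  have key : p ^ (n - 1) * (c * T) = p ^ (n - 1) * p ^ 2 := by
    have : p ^ (n - 1) * c * T = p ^ (n + 1) := by rw [← hc, hsplit, hR0]
    have h2 : p ^ (n + 1) = p ^ (n - 1) * p ^ 2 := by
      rw [← pow_add]
      congr 1
      omega
    rw [mul_assoc] at this
    rw [this, h2]
  have hppos : 0 < p ^ (n - 1) := Nat.pow_pos hp.pos
  have hcT : c * T = p ^ 2 := Nat.eq_of_mul_eq_mul_left hppos key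
  have hcpos : 0 < c := by
    rcases Nat.eq_zero_or_pos c with h0 | h
    · exfalso
      rw [h0, zero_mul] at hcT
      exact (pow_ne_zero 2 hp.ne_zero) hcT.symm
    · exact h
  have hTle : T ≤ p ^ 2 := by
    calc T ≤ c * T := Nat.le_mul_of_pos_left _ hcpos
      _ = p ^ 2 := hcT
  -- identify T with the goal
  have hchain1 : chain K 1 = ⁅derivedSeries G d, (⊤ : Subgroup G)⁆ := rfl
  have hchain0 : chain K 0 = derivedSeries G d := rfl
  rw [hT, hchain1, hchain0] at hTle
  exact hTle
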